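/- arXiv:1703.07456 — 4 statements merged into one kernel-verified Lean document; each statement's English description precedes it below -/
import Mathlib

section
/- Let N = (a_1, ..., a_s) be a tuple of positive integers with p = p(N) ≥ 2, where p(N) = max{ j : Σ_{a_i ≤ j}(j+1-a_i) ≤ j }. If no a_i satisfies a_i ≤ p-1 and at most one a_i satisfies a_i ≤ p, then for every integer b ≥ 2 one has p(N+b) = p, where N+b is the tuple obtained by appending b to N. -/
theorem stmt_4 (s : ℕ) (hs : 1 ≤ s) (a : Fin s → ℕ) (ha : ∀ i, 0 < a i)
    (p : ℕ) (hp : p = sSup {j : ℕ | ∑ i ∈ Finset.univ.filter (fun i => a i ≤ j), (j + 1 - a i) ≤ j})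
    (hp2 : 2 ≤ p)
    (h1 : ∀ i, ¬ a i ≤ p - 1)
    (h2 : (Finset.univ.filter (fun i => a i ≤ p)).card ≤ 1)
    (b : ℕ) (hb : 2 ≤ b)
    (a' : Fin (s + 1) → ℕ) (ha' : a' = Fin.snoc a b) :
    sSup {j : ℕ | ∑ i ∈ Finset.univ.filter (fun i => a' i ≤ j), (j + 1 - a' i) ≤ j} = p := by
  subst ha'
  set S : Set ℕ := {j : ℕ | ∑ i ∈ Finset.univ.filter (fun i => a i ≤ j), (j + 1 - a i) ≤ j}
    with hS
  have hbdd : BddAbove S := by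
    by_contra h
    rw [hp, csSup_of_not_bddAbove h, csSup_empty] at hp2
    exact absurd hp2 (by norm_num)
  have hne : S.Nonempty := by
    refine ⟨0, ?_⟩
    have : ∀ i ∈ Finset.univ.filter (fun i => a i ≤ 0), (0 + 1 - a i) = 0 := by
      intro i hi
      simp only [Finset.mem_filter] at hi
      have := ha i
      omega
    simp only [hS, Set.mem_setOf_eq]
    rw [Finset.sum_eq_zero this]
  have hpS : p ∈ S := hp ▸ Nat.sSup_mem hne hbdd
  have hub : ∀ j ∈ S, j ≤ p := fun j hj => hp ▸ le_csSup hbdd hj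
  -- S(p) ≤ 1
  have hSp1 : (∑ i ∈ Finset.univ.filter (fun i => a i ≤ p), (p + 1 - a i)) ≤ 1 := by
    calc (∑ i ∈ Finset.univ.filter (fun i => a i ≤ p), (p + 1 - a i))
        ≤ ∑ i ∈ Finset.univ.filter (fun i => a i ≤ p), 1 := by
          refine Finset.sum_le_sum fun i hi => ?_
          have := h1 i
          omega
      _ = (Finset.univ.filter (fun i => a i ≤ p)).card := by simp
      _ ≤ 1 := h2
  have key : ∀ j : ℕ,
      (∑ i ∈ Finset.univ.filter (fun i => (Fin.snoc a b : Fin (s+1) → ℕ) i ≤ j), (j + 1 - (Fin.snoc a b : Fin (s+1) → ℕ) i))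
      = (∑ i ∈ Finset.univ.filter (fun i => a i ≤ j), (j + 1 - a i))
        + (if b ≤ j then j + 1 - b else 0) := by
    intro j
    rw [Finset.sum_filter, Finset.sum_filter, Fin.sum_univ_castSucc]
    simp
  set S' : Set ℕ := {j : ℕ | ∑ i ∈ Finset.univ.filter (fun i => (Fin.snoc a b : Fin (s+1) → ℕ) i ≤ j),
      (j + 1 - (Fin.snoc a b : Fin (s+1) → ℕ) i) ≤ j} with hS'
  have hsub : S' ⊆ S := by
    intro j hj
    simp only [hS', Set.mem_setOf_eq, key j] at hj
    simp only [hS, Set.mem_setOf_eq]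
    omega
  have hpS' : p ∈ S' := by
    simp only [hS', Set.mem_setOf_eq, key p]
    split <;> omega
  refine le_antisymm ?_ ?_
  · exact csSup_le ⟨p, hpS'⟩ fun j hj => hub j (hsub hj)
  · exact le_csSup (hbdd.mono hsub) hpS'
end

section
/- Let s ≥ 4 and t ≥ s be integers with s odd, consider the tuple with s+1 entries consisting of one entry equal to s (playing the role of b = s) and s entries equal to t, i.e. n_j' counts entries ≤ j where the entries are (s, t, t, ..., t) with t repeated s times. Then q := max{ j : n_0' + ... + n_j' ≤ j } equals t - 1, and moreover n_{q+1}' = s + 1 = q + 2 - (n_0' + ... + n_q'). -/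
private lemma sumIf (c N : ℕ) :
    ∑ m ∈ Finset.range N, (if c ≤ m then 1 else 0) = N - c := by
  induction N with
  | zero => simp
  | succ N ih =>
    rw [Finset.sum_range_succ, ih]
    split <;> omega

theorem stmt_6 (s t : ℕ) (hs : 4 ≤ s) (hodd : Odd s) (hts : s ≤ t)
    (a : Fin (s + 1) → ℕ) (ha : a = Fin.cons s (fun _ => t))
    (n : ℕ → ℕ) (hn : ∀ j, n j = (Finset.univ.filter (fun i => a i ≤ j)).card)
    (q : ℕ) (hq : q = sSup {j : ℕ | ∑ m ∈ Finset.range (j + 1), n m ≤ j}) :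
    q = t - 1 ∧ n (q + 1) = s + 1 ∧
      q + 2 - ∑ m ∈ Finset.range (q + 1), n m = s + 1 := by
  have hnval : ∀ j, n j = (if s ≤ j then 1 else 0) + (if t ≤ j then s else 0) := by
    intro j
    rw [hn, ha, Finset.card_filter]
    rw [Fin.sum_univ_succ]
    simp [Fin.cons]
    congr 1
    by_cases h : t ≤ j
    · exact (Finset.sum_congr rfl (fun i _ => if_pos h)).trans (by rw [if_pos h]; simp)
    · exact (Finset.sum_congr rfl (fun i _ => if_neg h)).trans (by rw [if_neg h]; simp)
  have hsum : ∀ j : ℕ, ∑ m ∈ Finset.range j, n m = (j - s) + s * (j - t) := by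
    intro j
    calc ∑ m ∈ Finset.range j, n m
        = ∑ m ∈ Finset.range j, ((if s ≤ m then 1 else 0) + (if t ≤ m then s else 0)) := by
          exact Finset.sum_congr rfl fun m _ => hnval m
      _ = (∑ m ∈ Finset.range j, (if s ≤ m then 1 else 0))
          + (∑ m ∈ Finset.range j, (if t ≤ m then s else 0)) := Finset.sum_add_distrib
      _ = (j - s) + s * (j - t) := by
          rw [sumIf]
          congr 1
          have : ∀ m : ℕ, (if t ≤ m then s else 0) = s * (if t ≤ m then 1 else 0) := by
            intro m; split <;> simp
          simp_rw [this, ← Finset.mul_sum, sumIf]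
  have hset : {j : ℕ | ∑ m ∈ Finset.range (j + 1), n m ≤ j} = {j : ℕ | j < t} := by
    ext j
    simp only [Set.mem_setOf_eq, hsum]
    constructor
    · intro h
      by_contra hj
      push_neg at hj
      have h1 : 1 ≤ j + 1 - t := by omega
      have : s ≤ s * (j + 1 - t) := Nat.le_mul_of_pos_right s (by omega)
      omega
    · intro h
      have : j + 1 - t = 0 := by omega
      rw [this]
      omega
  have hq' : q = t - 1 := by
    rw [hq, hset]
    apply le_antisymm
    · apply csSup_le ⟨0, by simpa using (by omega : 0 < t)⟩
      intro j hj; simp only [Set.mem_setOf_eq] at hj; omega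
    · apply le_csSup ⟨t, fun j hj => le_of_lt hj⟩
      show t - 1 ∈ {j : ℕ | j < t}
      simp only [Set.mem_setOf_eq]; omega
  have hq1 : q + 1 = t := by omega
  refine ⟨hq', ?_, ?_⟩
  · rw [hq1, hnval, if_pos hts, if_pos le_rfl]
    omega
  · rw [hq1, hsum, Nat.sub_self, Nat.mul_zero]
    omega
end

section
/- Let s ≥ 4, t ≥ 3, and 3 ≤ b ≤ t be integers, and consider the tuple consisting of one entry b and s copies of t, so n_j counts entries at most j. Let α = max{ j ≥ 0 : j·s ≤ b - 1 } and p = max{ j : n_0 + ... + n_j ≤ j }. Then p = t + α - 1, n_0 + ... + n_p = t - b + α(s+1), and p + 2 - (n_0 + ... + n_p) = b - αs + 1. -/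
theorem stmt_7 (s t b : ℕ) (hs : 4 ≤ s) (ht : 3 ≤ t) (hb : 3 ≤ b) (hbt : b ≤ t)
    (a : Fin (s + 1) → ℕ) (ha : a = Fin.cons b (fun _ => t))
    (n : ℕ → ℕ) (hn : ∀ j, n j = (Finset.univ.filter (fun i => a i ≤ j)).card)
    (α : ℕ) (hα : α = sSup {j : ℕ | j * s ≤ b - 1})
    (p : ℕ) (hp : p = sSup {j : ℕ | ∑ m ∈ Finset.range (j + 1), n m ≤ j}) :
    p = t + α - 1 ∧
    (∑ m ∈ Finset.range (p + 1), n m = t - b + α * (s + 1)) ∧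
    p + 2 - ∑ m ∈ Finset.range (p + 1), n m = b - α * s + 1 := by
  -- explicit formula for n
  have hn' : ∀ j, n j = (if b ≤ j then 1 else 0) + (if t ≤ j then 1 else 0) * s := by
    intro j
    rw [hn, ha, Finset.card_filter, Fin.sum_univ_succ]
    simp [Fin.cons_zero, Fin.cons_succ]
  have key : ∀ (c N : ℕ), ∑ m ∈ Finset.range N, (if c ≤ m then 1 else 0) = N - c := by
    intro c N
    induction N with
    | zero => simp
    | succ N ih => rw [Finset.sum_range_succ, ih]; split <;> omega
  have hS : ∀ j, ∑ m ∈ Finset.range (j + 1), n m = (j + 1 - b) + (j + 1 - t) * s := by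
    intro j
    simp_rw [hn']
    rw [Finset.sum_add_distrib, key b, ← Finset.sum_mul, key t]
  -- facts about α
  have hA_bdd : BddAbove {j : ℕ | j * s ≤ b - 1} := by
    refine ⟨b, fun j hj => ?_⟩
    simp only [Set.mem_setOf_eq] at hj
    have : j ≤ j * s := Nat.le_mul_of_pos_right j (by omega)
    omega
  have hα1 : α * s ≤ b - 1 := by
    rw [hα]
    exact Nat.sSup_mem ⟨0, by simp⟩ hA_bdd
  have hα2 : ∀ j, j * s ≤ b - 1 → j ≤ α := fun j hj => hα ▸ le_csSup hA_bdd hj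
  -- the set for p
  have hub : ∀ j ∈ {j : ℕ | ∑ m ∈ Finset.range (j + 1), n m ≤ j}, j ≤ t + α - 1 := by
    intro j hj
    simp only [Set.mem_setOf_eq, hS] at hj
    by_cases hjt : j < t
    · omega
    · have hm : (j + 1 - t) * s ≤ b - 1 := by omega
      have := hα2 _ hm
      omega
  have hmem : (t + α - 1) ∈ {j : ℕ | ∑ m ∈ Finset.range (j + 1), n m ≤ j} := by
    simp only [Set.mem_setOf_eq, hS]
    have h1 : t + α - 1 + 1 - t = α := by omega
    rw [h1]
    omega
  have hp1 : p = t + α - 1 := by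
    rw [hp]
    exact le_antisymm (csSup_le ⟨t + α - 1, hmem⟩ hub) (le_csSup ⟨t + α - 1, hub⟩ hmem)
  have hSp : ∑ m ∈ Finset.range (p + 1), n m = t - b + α * (s + 1) := by
    rw [hp1, hS]
    have h1 : t + α - 1 + 1 - t = α := by omega
    rw [h1]
    have : α * (s + 1) = α * s + α := by ring
    omega
  refine ⟨hp1, hSp, ?_⟩
  rw [hSp, hp1]
  have : α * (s + 1) = α * s + α := by ring
  omega
end

section
/- Let s ≥ 2 and t ≥ 1 be integers and set p = ⌊s(t-1)/(s-1)⌋ if s ≤ t and p = t-1 if s > t. Then the condition 's = p + 2 - s(p+1-t) and s is even and s ≥ 4' (for s ≤ t), respectively 's = t+1 even' (for s > t), holds if and only if (s-1) | t and s ≥ 4 is even. Equivalently: for the tuple of s copies of t, n_{p+1} = p + 2 - (n_0 + ... + n_p) ≥ 4 with this number even and n_{p+2} = n_{p+1}, if and only if s-1 divides t and s ≥ 4 is even. -/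
theorem stmt_14 (s t : ℕ) (hs : 2 ≤ s) (ht : 1 ≤ t)
    (a : Fin s → ℕ) (ha : ∀ i, a i = t)
    (n : ℕ → ℕ) (hn : ∀ j, n j = (Finset.univ.filter (fun i => a i ≤ j)).card)
    (p : ℕ) (hp : p = sSup {j : ℕ | ∑ m ∈ Finset.range (j + 1), n m ≤ j}) :
    (n (p + 1) = p + 2 - ∑ m ∈ Finset.range (p + 1), n m ∧
      4 ≤ n (p + 1) ∧ Even (n (p + 1)) ∧ n (p + 2) = n (p + 1)) ↔
    ((s - 1) ∣ t ∧ 4 ≤ s ∧ Even s) := by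
  have hn' : ∀ j, n j = if t ≤ j then s else 0 := by
    intro j
    rw [hn]
    split
    · rw [Finset.filter_true_of_mem, Finset.card_univ, Fintype.card_fin]
      intro i _; rw [ha]; assumption
    · rw [Finset.filter_false_of_mem, Finset.card_empty]
      intro i _; rw [ha]; omega
  have hsum : ∀ j, ∑ m ∈ Finset.range j, n m = s * (j - t) := by
    intro j
    induction j with
    | zero => simp
    | succ j ih =>
      rw [Finset.sum_range_succ, ih, hn' j]
      rcases le_or_gt t j with h | h
      · rw [if_pos h]
        have e : j + 1 - t = (j - t) + 1 := by omega
        rw [e, Nat.mul_succ]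
      · rw [if_neg (by omega)]
        have e : j + 1 - t = 0 := by omega
        have e2 : j - t = 0 := by omega
        simp [e, e2]
  obtain ⟨P, hPdef⟩ : ∃ P, P = s * (t - 1) / (s - 1) := ⟨_, rfl⟩
  have hs1 : 0 < s - 1 := by omega
  have hiff : ∀ j, (∑ m ∈ Finset.range (j + 1), n m ≤ j) ↔ j ≤ P := by
    intro j
    rw [hsum, hPdef, Nat.le_div_iff_mul_le hs1]
    rcases le_or_gt t (j + 1) with h | h
    · have e1 : s * (j + 1 - t) + s * t = s * (j + 1) := by
        rw [← Nat.mul_add, Nat.sub_add_cancel h]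
      have e2 : j * (s - 1) + j = j * s := by
        rw [← Nat.mul_succ]; congr 1; omega
      have e3 : s * (t - 1) + s = s * t := by
        rw [← Nat.mul_succ]; congr 1; omega
      have e4 : s * (j + 1) = s * j + s := by rw [Nat.mul_succ]
      have e5 : j * s = s * j := Nat.mul_comm _ _
      omega
    · constructor
      · intro _
        calc j * (s - 1) ≤ (t - 1) * s := Nat.mul_le_mul (by omega) (by omega)
          _ = s * (t - 1) := Nat.mul_comm _ _
      · intro _
        have e : j + 1 - t = 0 := by omega
        simp [e]
  have hset : {j : ℕ | ∑ m ∈ Finset.range (j + 1), n m ≤ j} = Set.Iic P :=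
    Set.ext fun j => hiff j
  rw [hset, csSup_Iic] at hp
  -- p = t - 1 + (t-1)/(s-1)
  obtain ⟨k, hkdef⟩ : ∃ k, k = (t - 1) / (s - 1) := ⟨_, rfl⟩
  have hpk : p = (t - 1) + k := by
    rw [hp, hPdef, hkdef]
    have e : (s - 1) + 1 = s := by omega
    have h1 : s * (t - 1) = (s - 1) * (t - 1) + (t - 1) := by
      calc s * (t - 1) = ((s - 1) + 1) * (t - 1) := by rw [e]
        _ = (s - 1) * (t - 1) + (t - 1) := by ring
    rw [h1, Nat.mul_add_div hs1]
  have htp : t ≤ p + 1 := by omega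
  have hnp1 : n (p + 1) = s := by rw [hn', if_pos htp]
  have hnp2 : n (p + 2) = s := by rw [hn', if_pos (by omega)]
  have hsum' : ∑ m ∈ Finset.range (p + 1), n m = s * k := by
    rw [hsum]; congr 1; omega
  rw [hnp1, hnp2, hsum']
  have key : s = p + 2 - s * k ↔ (s - 1) ∣ t := by
    constructor
    · intro h
      have e1 : (s - 1) * (k + 1) + (k + 1) = s * (k + 1) := by
        have e : (s - 1) + 1 = s := by omega
        calc (s - 1) * (k + 1) + (k + 1) = ((s - 1) + 1) * (k + 1) := by ring
          _ = s * (k + 1) := by rw [e]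
      have e2 : s * (k + 1) = s * k + s := by rw [Nat.mul_succ]
      exact ⟨k + 1, by omega⟩
    · rintro ⟨d, hd⟩
      have hd1 : 1 ≤ d := by
        rcases Nat.eq_zero_or_pos d with h | h
        · subst h; simp at hd; omega
        · exact h
      have e0 : (s - 1) * (d - 1) + (s - 1) = (s - 1) * d := by
        have e : (d - 1) + 1 = d := by omega
        calc (s - 1) * (d - 1) + (s - 1) = (s - 1) * ((d - 1) + 1) := by ring
          _ = (s - 1) * d := by rw [e]
      have hk2 : k = d - 1 := by
        have e : t - 1 = (s - 1) * (d - 1) + (s - 2) := by omega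
        rw [hkdef, e, Nat.mul_add_div hs1, Nat.div_eq_of_lt (show s - 2 < s - 1 by omega)]
        omega
      have e1 : s * (d - 1) + s = s * d := by
        have e : (d - 1) + 1 = d := by omega
        calc s * (d - 1) + s = s * ((d - 1) + 1) := by ring
          _ = s * d := by rw [e]
      have e2 : (s - 1) * d + d = s * d := by
        have e : (s - 1) + 1 = s := by omega
        calc (s - 1) * d + d = ((s - 1) + 1) * d := by ring
          _ = s * d := by rw [e]
      have e3 : s * k = s * (d - 1) := by rw [hk2]
      omega
  constructor
  · rintro ⟨h1, h2, h3, _⟩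
    exact ⟨key.mp h1, h2, h3⟩
  · rintro ⟨h1, h2, h3⟩
    exact ⟨key.mpr h1, h2, h3, rfl⟩
end
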